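/- Let g be a derivator on [a,b] and f : [a,b] → 𝔽 be g-continuous on [a,b]. Then: (1) f is left-continuous at every t₀ ∈ (a,b]; (2) if g is continuous at t₀ ∈ [a,b), then f is continuous at t₀; (3) if g is constant on a subinterval [α,β] ⊆ [a,b], then f is constant on [α,β]. -/

import Mathlib

open MeasureTheory Set Function Filter Topology

noncomputable section

/-- A derivator: a non-decreasing, left-continuous function. -/
def IsDerivator (g : ℝ → ℝ) : Prop :=
  Monotone g ∧ ∀ x : ℝ, ContinuousWithinAt g (Set.Iic x) x

/-- The jump `Δ⁺g(t) = g(t⁺) - g(t)`. -/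
def jumpG (g : ℝ → ℝ) (t : ℝ) : ℝ := Function.rightLim g t - g t

/-- The set of discontinuity points of `g`. -/
def Dg (g : ℝ → ℝ) : Set ℝ := {t | 0 < jumpG g t}

/-- The jump part `g^B` of `g`, with base point `a`. -/
def jumpPart (g : ℝ → ℝ) (a : ℝ) : ℝ → ℝ := fun t =>
  if a < t then ∑' s : (Set.Ico a t : Set ℝ), jumpG g s
  else - ∑' s : (Set.Ico t a : Set ℝ), jumpG g s

/-- The continuous part `g^C = g - g^B` of `g`, with base point `a`. -/
def contPart (g : ℝ → ℝ) (a : ℝ) : ℝ → ℝ := fun t => g t - jumpPart g a t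

/-- The Lebesgue–Stieltjes outer measure associated to `g`, generated by
`μ_g([c,d)) = g d - g c` on half-open intervals. -/
def stieltjesOuter (g : ℝ → ℝ) : OuterMeasure ℝ :=
  OuterMeasure.ofFunction
    (fun s => ⨅ (p : ℝ × ℝ) (_ : s = Set.Ico p.1 p.2), ENNReal.ofReal (g p.2 - g p.1))
    (by
      refine le_antisymm ?_ zero_le
      refine le_trans (iInf₂_le ((0 : ℝ), (0 : ℝ)) ?_) ?_ <;> simp)

open Classical in
/-- The Lebesgue–Stieltjes measure of a non-decreasing left-continuous `g`: the measure with
`μ_g([c,d)) = g d - g c`.  It is realised as the Stieltjes measure of the right-continuous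
modification of `g`. -/
def stieltjesMeasure (g : ℝ → ℝ) : Measure ℝ :=
  if h : Monotone g then h.stieltjesFunction.measure else 0

variable {E : Type*} [NormedAddCommGroup E]

/-- `f` is `g`-continuous at `t` relative to the set `s`. -/
def GContWithin (g : ℝ → ℝ) (f : ℝ → E) (s : Set ℝ) (t : ℝ) : Prop :=
  ∀ ε > 0, ∃ δ > 0, ∀ u ∈ s, |g t - g u| < δ → ‖f t - f u‖ < ε

/-- `f` is `g`-continuous on the set `s`. -/
def GContOn (g : ℝ → ℝ) (f : ℝ → E) (s : Set ℝ) : Prop := ∀ t ∈ s, GContWithin g f s t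

/-- `t` lies in `C_g`: `g` is constant in a neighbourhood of `t`. -/
def InCg (g : ℝ → ℝ) (t : ℝ) : Prop :=
  ∃ ε > 0, ∀ u ∈ Set.Ioo (t - ε) (t + ε), ∀ v ∈ Set.Ioo (t - ε) (t + ε), g u = g v

/-- `t ∈ N_g⁻`: `t` is the left endpoint of a constancy interval of `g`, `t ∉ D_g`. -/
def InNgMinus (g : ℝ → ℝ) (t : ℝ) : Prop :=
  t ∉ Dg g ∧ ¬ InCg g t ∧
    ∃ ε > 0, ∀ u ∈ Set.Ioo t (t + ε), ∀ v ∈ Set.Ioo t (t + ε), g u = g v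

/-- `t ∈ N_g⁺`: `t` is the right endpoint of a constancy interval of `g`, `t ∉ D_g`. -/
def InNgPlus (g : ℝ → ℝ) (t : ℝ) : Prop :=
  t ∉ Dg g ∧ ¬ InCg g t ∧
    ∃ ε > 0, ∀ u ∈ Set.Ioo (t - ε) t, ∀ v ∈ Set.Ioo (t - ε) t, g u = g v

/-- The right endpoint `bₙ` of the constancy component of `g` containing `t`. -/
def compEnd (g : ℝ → ℝ) (t : ℝ) : ℝ := sSup {u | ∀ v ∈ Set.Icc t u, g v = g t}

open Classical in
/-- The Stieltjes `g`-derivative of `f : s → E` at `t`, in the extended sense: at points of `D_g`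
one takes the right-hand limit of the difference quotient, at points of `C_g` the right-hand
limit at the right endpoint of the constancy component, and elsewhere the limit of the difference
quotient restricted to points where `g` differs from `g t` (this covers the points of `N_g`). -/
def HasGDerivWithinAt [NormedSpace ℝ E] (g : ℝ → ℝ) (f : ℝ → E) (s : Set ℝ) (t : ℝ) (L : E) :
    Prop :=
  if t ∈ Dg g then
    Tendsto (fun u => (g u - g t)⁻¹ • (f u - f t)) (𝓝[s ∩ Set.Ioi t] t) (𝓝 L)
  else if InCg g t then
    Tendsto (fun u => (g u - g (compEnd g t))⁻¹ • (f u - f (compEnd g t)))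
      (𝓝[s ∩ Set.Ioi (compEnd g t)] (compEnd g t)) (𝓝 L)
  else
    Tendsto (fun u => (g u - g t)⁻¹ • (f u - f t)) (𝓝[s ∩ {u | g u ≠ g t}] t) (𝓝 L)

/-- `v` is `g`-absolutely continuous on `[0,T]`: it is an indefinite `μ_g`-integral. -/
def ACgOn (g : ℝ → ℝ) (v : ℝ → ℂ) (T : ℝ) : Prop :=
  ∃ h : ℝ → ℂ, MeasureTheory.IntegrableOn h (Set.Ico 0 T) (stieltjesMeasure g) ∧
    ∀ t ∈ Set.Icc 0 T, v t = v 0 + ∫ s in Set.Ico 0 t, h s ∂(stieltjesMeasure g)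

end
/-- a `g`-continuous function on `[a,b]` is (1) left-continuous on `(a,b]`;
(2) continuous at any `t₀ ∈ [a,b)` where `g` is continuous; (3) constant on any subinterval
where `g` is constant. -/
theorem stmt7 {E : Type*} [NormedAddCommGroup E] (g : ℝ → ℝ) (hg : IsDerivator g)
    (a b : ℝ) (hab : a ≤ b) (f : ℝ → E) (hf : GContOn g f (Set.Icc a b)) :
    (∀ t₀ ∈ Set.Ioc a b, ContinuousWithinAt f (Set.Icc a b ∩ Set.Iio t₀) t₀) ∧
    (∀ t₀ ∈ Set.Ico a b, ContinuousWithinAt g (Set.Icc a b) t₀ →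
      ContinuousWithinAt f (Set.Icc a b) t₀) ∧
    (∀ α β : ℝ, a ≤ α → α ≤ β → β ≤ b →
      (∀ u ∈ Set.Icc α β, ∀ v ∈ Set.Icc α β, g u = g v) →
      ∀ u ∈ Set.Icc α β, ∀ v ∈ Set.Icc α β, f u = f v) := by
  refine ⟨?_, ?_, ?_⟩
  · intro t₀ ht₀
    have ht : t₀ ∈ Set.Icc a b := ⟨le_of_lt ht₀.1, ht₀.2⟩
    have hgc : Tendsto g (𝓝[Set.Icc a b ∩ Set.Iio t₀] t₀) (𝓝 (g t₀)) :=
      (hg.2 t₀).mono_left (nhdsWithin_mono _ (fun u hu => Set.mem_Iic.mpr (le_of_lt (Set.mem_Iio.mp hu.2))))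
    rw [ContinuousWithinAt, Metric.tendsto_nhds]
    intro ε hε
    obtain ⟨δ, hδ, h⟩ := hf t₀ ht ε hε
    filter_upwards [(Metric.tendsto_nhds.mp hgc) δ hδ, self_mem_nhdsWithin] with u hu hus
    rw [dist_eq_norm, ← norm_neg, neg_sub]
    exact h u hus.1 (by rw [abs_sub_comm]; simpa [Real.dist_eq] using hu)
  · intro t₀ ht₀ hgc
    rw [ContinuousWithinAt, Metric.tendsto_nhds]
    intro ε hε
    obtain ⟨δ, hδ, h⟩ := hf t₀ ⟨ht₀.1, le_of_lt ht₀.2⟩ ε hε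
    filter_upwards [(Metric.tendsto_nhds.mp hgc) δ hδ, self_mem_nhdsWithin] with u hu hus
    rw [dist_eq_norm, ← norm_neg, neg_sub]
    exact h u hus (by rw [abs_sub_comm]; simpa [Real.dist_eq] using hu)
  · intro α β hα hαβ hβ hconst u hu v hv
    have hu' : u ∈ Set.Icc a b := ⟨hα.trans hu.1, hu.2.trans hβ⟩
    have hv' : v ∈ Set.Icc a b := ⟨hα.trans hv.1, hv.2.trans hβ⟩
    by_contra hne
    have hpos : 0 < ‖f u - f v‖ := by
      simpa [norm_pos_iff, sub_eq_zero] using hne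
    obtain ⟨δ, hδ, h⟩ := hf u hu' _ hpos
    exact lt_irrefl _ (h v hv' (by rw [hconst u hu v hv]; simpa using hδ))
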